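/- The operator G = T*∘B∘T : H → H is a bounded linear operator; its kernel equals ker T; its range equals the range of T*, which is a closed subspace of H equal to (ker T)⊥, so that H decomposes orthogonally as H = ker T ⊕ Ran G. Moreover G is boundedly invertible on its range: G maps (ker T)⊥ bijectively onto itself and there exists a constant c > 0 with ‖G x‖ ≥ c‖x‖ for all x ∈ (ker T)⊥. -/

import Mathlib

open scoped RealInnerProductSpace

section Aux

variable {V H : Type*} [NormedAddCommGroup V] [InnerProductSpace ℝ V] [CompleteSpace V]
    [NormedAddCommGroup H] [InnerProductSpace ℝ H] [CompleteSpace H]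

/-- A coercive bounded operator on a real Hilbert space is surjective. -/
lemma coercive_surjective (B : V →L[ℝ] V) (α : ℝ) (hα : 0 < α)
    (hB : ∀ v : V, α * ‖v‖ ^ 2 ≤ ⟪B v, v⟫) : Function.Surjective B := by
  have hlow : ∀ v : V, α * ‖v‖ ≤ ‖B v‖ := by
    intro v
    rcases eq_or_ne v 0 with rfl | hv
    · simp
    · have h1 : α * ‖v‖ ^ 2 ≤ ‖B v‖ * ‖v‖ :=
        (hB v).trans (real_inner_le_norm _ _)
      have hv0 : (0 : ℝ) < ‖v‖ := norm_pos_iff.mpr hv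
      nlinarith
  have hanti : AntilipschitzWith (α⁻¹).toNNReal B := by
    refine ContinuousLinearMap.antilipschitz_of_bound B fun x => ?_
    have := hlow x
    rw [Real.coe_toNNReal _ (by positivity), inv_mul_eq_div, le_div_iff₀ hα]
    nlinarith [hlow x]
  have hclosed : IsClosed (Set.range B) := hanti.isClosed_range B.uniformContinuous
  have hclosed' : IsClosed ((LinearMap.range (B : V →ₗ[ℝ] V) : Submodule ℝ V) : Set V) := by
    rw [LinearMap.coe_range, ContinuousLinearMap.coe_coe]; exact hclosed
  haveI : CompleteSpace (LinearMap.range (B : V →ₗ[ℝ] V)) := hclosed'.completeSpace_coe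
  have horth : (LinearMap.range (B : V →ₗ[ℝ] V))ᗮ = ⊥ := by
    rw [Submodule.eq_bot_iff]
    intro v hv
    have h0 : ⟪B v, v⟫ = 0 := hv (B v) (LinearMap.mem_range_self _ v)
    have := hB v
    have hn : ‖v‖ ^ 2 ≤ 0 := by nlinarith
    have : ‖v‖ = 0 := by nlinarith [sq_nonneg ‖v‖, norm_nonneg v]
    simpa using this
  have : LinearMap.range (B : V →ₗ[ℝ] V) = ⊤ := (Submodule.orthogonal_eq_bot_iff).mp horth
  exact LinearMap.range_eq_top.mp this

end Aux

set_option maxHeartbeats 1000000 in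
/-- Properties of the discretized operator `G = T* ∘ B ∘ T`: its kernel is `ker T`,
its range is `Ran T* = (ker T)ᗮ`, which is closed, `H` decomposes orthogonally as
`ker T ⊕ Ran G`, and `G` is boundedly invertible on its range. -/
theorem discretized_operator_properties
    {V H : Type*} [NormedAddCommGroup V] [InnerProductSpace ℝ V] [CompleteSpace V]
    [NormedAddCommGroup H] [InnerProductSpace ℝ H] [CompleteSpace H]
    (B : V →L[ℝ] V) (α : ℝ) (hα : 0 < α)
    (hB : ∀ v : V, α * ‖v‖ ^ 2 ≤ ⟪B v, v⟫)
    (T : H →L[ℝ] V) (hT : Function.Surjective T)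
    (G : H →L[ℝ] H) (hG : G = (ContinuousLinearMap.adjoint T).comp (B.comp T)) :
    LinearMap.ker (G : H →ₗ[ℝ] H) = LinearMap.ker (T : H →ₗ[ℝ] V) ∧
    LinearMap.range (G : H →ₗ[ℝ] H) = LinearMap.range (ContinuousLinearMap.adjoint T : V →ₗ[ℝ] H) ∧
    IsClosed ((LinearMap.range (ContinuousLinearMap.adjoint T : V →ₗ[ℝ] H) : Submodule ℝ H) : Set H) ∧
    (LinearMap.range (ContinuousLinearMap.adjoint T : V →ₗ[ℝ] H) : Submodule ℝ H) = (LinearMap.ker (T : H →ₗ[ℝ] V))ᗮ ∧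
    LinearMap.ker (T : H →ₗ[ℝ] V) ⊔ LinearMap.range (G : H →ₗ[ℝ] H) = ⊤ ∧
    (∀ x ∈ (LinearMap.ker (T : H →ₗ[ℝ] V))ᗮ, G x ∈ (LinearMap.ker (T : H →ₗ[ℝ] V))ᗮ) ∧
    Set.BijOn G ((LinearMap.ker (T : H →ₗ[ℝ] V))ᗮ : Set H) ((LinearMap.ker (T : H →ₗ[ℝ] V))ᗮ : Set H) ∧
    ∃ c : ℝ, 0 < c ∧ ∀ x ∈ (LinearMap.ker (T : H →ₗ[ℝ] V))ᗮ, c * ‖x‖ ≤ ‖G x‖ := by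
  obtain ⟨C, hC0, hC⟩ := T.exists_preimage_norm_le hT
  set Tad := ContinuousLinearMap.adjoint T with hTad
  -- the key inner-product identity
  have hGinner : ∀ x : H, ⟪G x, x⟫ = ⟪B (T x), T x⟫ := by
    intro x
    rw [hG]
    exact ContinuousLinearMap.adjoint_inner_left T x (B (T x))
  -- kernel of G = kernel of T
  have hker : LinearMap.ker (G : H →ₗ[ℝ] H) = LinearMap.ker (T : H →ₗ[ℝ] V) := by
    ext x
    simp only [LinearMap.mem_ker, ContinuousLinearMap.coe_coe]
    constructor
    · intro hx
      have h0 : ⟪B (T x), T x⟫ = 0 := by rw [← hGinner x, hx]; simp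
      have h1 : α * ‖T x‖ ^ 2 ≤ 0 := h0 ▸ hB (T x)
      have h2 : ‖T x‖ ^ 2 ≤ 0 := by nlinarith [sq_nonneg ‖T x‖]
      have h3 : ‖T x‖ ^ 2 = 0 := le_antisymm h2 (sq_nonneg _)
      have := sq_eq_zero_iff.mp h3
      simpa using this
    · intro hx
      rw [hG]
      simp [hx]
  -- B surjective
  have hBsurj : Function.Surjective B := coercive_surjective B α hα hB
  -- range of G = range of T*
  have hrange : LinearMap.range (G : H →ₗ[ℝ] H) = LinearMap.range (Tad : V →ₗ[ℝ] H) := by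
    apply le_antisymm
    · rintro _ ⟨x, rfl⟩
      exact ⟨B (T x), by simp [hG]⟩
    · rintro _ ⟨v, rfl⟩
      obtain ⟨w, rfl⟩ := hBsurj v
      obtain ⟨x, rfl⟩ := hT w
      exact ⟨x, by simp [hG]⟩
  -- T* is bounded below
  have hTadLow : ∀ v : V, ‖v‖ ≤ C * ‖Tad v‖ := by
    intro v
    obtain ⟨x, hx, hnx⟩ := hC v
    rcases eq_or_ne v 0 with rfl | hv
    · simp
    · have h1 : ⟪v, v⟫ = ⟪Tad v, x⟫ := by
        rw [ContinuousLinearMap.adjoint_inner_left, hx]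
      have h2 : ⟪v, v⟫ ≤ ‖Tad v‖ * (C * ‖v‖) :=
        h1.le.trans ((real_inner_le_norm _ _).trans
          (by gcongr))
      have h3 : ‖v‖ ^ 2 ≤ ‖Tad v‖ * (C * ‖v‖) := by
        rwa [real_inner_self_eq_norm_sq] at h2
      have hv0 : (0 : ℝ) < ‖v‖ := norm_pos_iff.mpr hv
      nlinarith
  -- range of T* is closed
  have hanti : AntilipschitzWith C.toNNReal Tad := by
    refine ContinuousLinearMap.antilipschitz_of_bound Tad fun v => ?_
    rw [Real.coe_toNNReal _ hC0.le]
    exact hTadLow v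
  have hclosedSet : IsClosed (Set.range Tad) := hanti.isClosed_range Tad.uniformContinuous
  have hclosed : IsClosed ((LinearMap.range (Tad : V →ₗ[ℝ] H) : Submodule ℝ H) : Set H) := by
    rw [LinearMap.coe_range, ContinuousLinearMap.coe_coe]; exact hclosedSet
  haveI : CompleteSpace (LinearMap.range (Tad : V →ₗ[ℝ] H)) := hclosed.completeSpace_coe
  -- (range T*)ᗮ = ker T
  have horthker : (LinearMap.range (Tad : V →ₗ[ℝ] H))ᗮ = LinearMap.ker (T : H →ₗ[ℝ] V) := by
    ext x
    rw [Submodule.mem_orthogonal, LinearMap.mem_ker]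
    constructor
    · intro h
      have h0 : ⟪T x, T x⟫ = 0 := by
        have := h (Tad (T x)) (LinearMap.mem_range_self _ _)
        rwa [ContinuousLinearMap.adjoint_inner_left] at this
      simpa [inner_self_eq_zero] using h0
    · rintro hx _ ⟨v, rfl⟩
      rw [ContinuousLinearMap.coe_coe, ContinuousLinearMap.adjoint_inner_left]
      simp [show T x = 0 from hx]
  -- range T* = (ker T)ᗮ
  have hrangeOrth : (LinearMap.range (Tad : V →ₗ[ℝ] H) : Submodule ℝ H) = (LinearMap.ker (T : H →ₗ[ℝ] V))ᗮ := by
    rw [← horthker, Submodule.orthogonal_orthogonal]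
  haveI : CompleteSpace (LinearMap.ker (T : H →ₗ[ℝ] V)) :=
    (ContinuousLinearMap.isClosed_ker T).completeSpace_coe
  -- decomposition
  have hsup : LinearMap.ker (T : H →ₗ[ℝ] V) ⊔ LinearMap.range (G : H →ₗ[ℝ] H) = ⊤ := by
    rw [hrange, hrangeOrth]
    exact Submodule.sup_orthogonal_of_hasOrthogonalProjection
  -- G maps (ker T)ᗮ to itself
  have hmaps : ∀ x : H, G x ∈ (LinearMap.ker (T : H →ₗ[ℝ] V))ᗮ := by
    intro x
    rw [← hrangeOrth, ← hrange]
    exact LinearMap.mem_range_self _ x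
  -- bijectivity on (ker T)ᗮ
  have hinj : Set.InjOn G ((LinearMap.ker (T : H →ₗ[ℝ] V))ᗮ : Set H) := by
    intro x hx y hy hxy
    have hsub : x - y ∈ LinearMap.ker (T : H →ₗ[ℝ] V) := by
      rw [← hker, LinearMap.mem_ker]
      simp only [ContinuousLinearMap.coe_coe, map_sub, hxy, sub_self]
    have hsub' : x - y ∈ (LinearMap.ker (T : H →ₗ[ℝ] V))ᗮ := Submodule.sub_mem _ hx hy
    have : ⟪x - y, x - y⟫ = 0 := hsub' (x - y) hsub
    rw [inner_self_eq_zero, sub_eq_zero] at this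
    exact this
  have hsurjOn : Set.SurjOn G ((LinearMap.ker (T : H →ₗ[ℝ] V))ᗮ : Set H) ((LinearMap.ker (T : H →ₗ[ℝ] V))ᗮ : Set H) := by
    intro y hy
    have : y ∈ LinearMap.range (G : H →ₗ[ℝ] H) := by
      rw [hrange, hrangeOrth]; exact hy
    obtain ⟨x, hx⟩ := this
    obtain ⟨k, hk, p, hp, hxkp⟩ := (LinearMap.ker (T : H →ₗ[ℝ] V)).exists_add_mem_mem_orthogonal x
    refine ⟨p, hp, ?_⟩
    have hGk : G k = 0 := by
      have h' : k ∈ LinearMap.ker (G : H →ₗ[ℝ] H) := by rw [hker]; exact hk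
      exact h'
    have hsplit : G x = G k + G p := by rw [hxkp]; simp
    show G p = y
    rw [← hx, ContinuousLinearMap.coe_coe, hsplit, hGk, zero_add]
  -- lower bound on (ker T)ᗮ
  have hTlow : ∀ x ∈ (LinearMap.ker (T : H →ₗ[ℝ] V))ᗮ, ‖x‖ ≤ C * ‖T x‖ := by
    intro x hx
    obtain ⟨y, hy, hny⟩ := hC (T x)
    rcases eq_or_ne x 0 with rfl | hx0
    · simp
    · have hkerxy : x - y ∈ LinearMap.ker (T : H →ₗ[ℝ] V) := by
        rw [LinearMap.mem_ker]
        simp [hy]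
      have h0 : ⟪x - y, x⟫ = 0 := hx (x - y) hkerxy
      have h1 : ⟪x, x⟫ = ⟪y, x⟫ := by
        have := inner_sub_left (𝕜 := ℝ) x y x
        rw [h0] at this
        linarith
      have h2 : ‖x‖ ^ 2 ≤ ‖y‖ * ‖x‖ := by
        rw [← real_inner_self_eq_norm_sq, h1]
        exact real_inner_le_norm _ _
      have hx0' : (0 : ℝ) < ‖x‖ := norm_pos_iff.mpr hx0
      nlinarith
  refine ⟨hker, hrange, hclosed, hrangeOrth, hsup, fun x _ => hmaps x,
    ⟨fun x _ => hmaps x, hinj, hsurjOn⟩, α / C ^ 2, by positivity, ?_⟩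
  intro x hx
  rcases eq_or_ne x 0 with rfl | hx0
  · simp
  have hx0' : (0 : ℝ) < ‖x‖ := norm_pos_iff.mpr hx0
  have h1 : α * ‖T x‖ ^ 2 ≤ ⟪G x, x⟫ := by rw [hGinner]; exact hB (T x)
  have h2 : ⟪G x, x⟫ ≤ ‖G x‖ * ‖x‖ := real_inner_le_norm _ _
  have h3 : ‖x‖ ≤ C * ‖T x‖ := hTlow x hx
  have h4 : ‖x‖ ^ 2 ≤ C ^ 2 * ‖T x‖ ^ 2 := by nlinarith [norm_nonneg (T x)]
  have hC2 : (0 : ℝ) < C ^ 2 := by positivity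
  have h5 : α * ‖x‖ ^ 2 ≤ C ^ 2 * (‖G x‖ * ‖x‖) := by
    nlinarith [mul_le_mul_of_nonneg_left h4 hα.le, mul_le_mul_of_nonneg_left h1 hC2.le,
      mul_le_mul_of_nonneg_left h2 hC2.le]
  rw [div_mul_eq_mul_div, div_le_iff₀ hC2]
  nlinarith [h5, hx0']
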